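/- Let e be a real number with e > 1, and let l, f be positive reals. Set a := m − f and b := a·√(e² − 1) for a real m with m − f > 0. Then the point (m, l/2) lies on the hyperbola x²/a² − y²/b² = 1 (i.e. m²/a² − (l/2)²/b² = 1) if and only if m = l²/(8·f·(e² − 1)) + f/2. Consequently the hyperbola branch of eccentricity e passing through (m, l/2), (m, −l/2) and the vertex (a, 0), with a = m − f, is uniquely determined by e, l and f, with a = l²/(8·f·(e² − 1)) − f/2. -/

import Mathlib

/-- For `e > 1` and positive `l`, `f`, with `a = m - f > 0` and
`b = a·√(e² - 1)`, the point `(m, l/2)` lies on the hyperbola `x²/a² - y²/b² = 1`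
iff `m = l²/(8·f·(e² - 1)) + f/2`; consequently `a = l²/(8·f·(e² - 1)) - f/2`,
so the hyperbola is uniquely determined by `e`, `l`, `f`. -/
theorem hyperbola_arc_unique (e l f m : ℝ) (he : 1 < e)
    (hl : 0 < l) (hf : 0 < f) (ha : 0 < m - f) :
    (m ^ 2 / (m - f) ^ 2 - (l / 2) ^ 2 / ((m - f) * Real.sqrt (e ^ 2 - 1)) ^ 2 = 1 ↔
      m = l ^ 2 / (8 * f * (e ^ 2 - 1)) + f / 2) ∧
    (m = l ^ 2 / (8 * f * (e ^ 2 - 1)) + f / 2 →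
      m - f = l ^ 2 / (8 * f * (e ^ 2 - 1)) - f / 2) := by
  have hk : (0:ℝ) < e ^ 2 - 1 := by nlinarith
  have hs : Real.sqrt (e ^ 2 - 1) ^ 2 = e ^ 2 - 1 := Real.sq_sqrt hk.le
  have hne : (m - f) ≠ 0 := ne_of_gt ha
  have hkne : e ^ 2 - 1 ≠ 0 := ne_of_gt hk
  constructor
  · rw [mul_pow, hs]
    constructor
    · intro h
      field_simp at h ⊢
      have h3 : (m - f) ^ 2 * (4 * m ^ 2 * (e ^ 2 - 1) - l ^ 2 - 4 * (m - f) ^ 2 * (e ^ 2 - 1)) = 0 := by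
        linear_combination (m - f) ^ 2 * h
      have h2 := (mul_eq_zero.mp h3).resolve_left (pow_ne_zero 2 hne)
      linear_combination 2 * h2
    · intro h
      field_simp at h ⊢
      linear_combination (1 / 2 : ℝ) * h
  · intro h
    rw [h]; ring
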